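/- For α < 0 and real u > 0, v > 0, h ∈ ℝ: the integral ∫_0^∞ x^{h-1} exp(-u x^α - v x) dx converges. -/

import Mathlib

open MeasureTheory Real

/-- For `α < 0` and `u, v > 0`, any `h ∈ ℝ`, the integral
`∫_0^∞ x^{h-1} exp(-u x^α - v x) dx` converges. -/
theorem stmt_7 (α u v h : ℝ) (hα : α < 0) (hu : 0 < u) (hv : 0 < v) :
    IntegrableOn (fun x : ℝ => x ^ (h - 1) * Real.exp (-u * x ^ α - v * x))
      (Set.Ioi (0 : ℝ)) := by
  set f : ℝ → ℝ := fun x => x ^ (h - 1) * Real.exp (-u * x ^ α - v * x) with hf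
  have hcont : ContinuousOn f (Set.Ioi (0:ℝ)) := by
    apply ContinuousOn.mul
    · exact fun x hx => (Real.continuousAt_rpow_const x _ (Or.inl (ne_of_gt hx))).continuousWithinAt
    · apply Real.continuous_exp.comp_continuousOn
      apply ContinuousOn.sub
      · exact continuousOn_const.mul (fun x hx =>
          (Real.continuousAt_rpow_const x _ (Or.inl (ne_of_gt hx))).continuousWithinAt)
      · exact continuousOn_const.mul continuousOn_id
  rw [← Set.Ioc_union_Ioi_eq_Ioi (zero_le_one' ℝ)]
  apply IntegrableOn.union
  · -- near zero
    obtain ⟨N, hN⟩ := exists_nat_gt (h / α)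
    have hαN : α * N < h := by
      rw [div_lt_iff_of_neg hα] at hN
      linarith [hN]
    have hexp : -1 < h - 1 - α * N := by linarith
    have hg : IntegrableOn (fun x : ℝ => (N.factorial / u ^ N) * x ^ (h - 1 - α * N))
        (Set.Ioc (0:ℝ) 1) := by
      apply Integrable.const_mul
      have := (intervalIntegral.intervalIntegrable_rpow' (a := 0) (b := 1) hexp)
      rwa [intervalIntegrable_iff_integrableOn_Ioc_of_le zero_le_one] at this
    apply hg.mono' ((hcont.mono (Set.Ioc_subset_Ioi_self)).aestronglyMeasurable measurableSet_Ioc)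
    filter_upwards [ae_restrict_mem measurableSet_Ioc] with x hx
    obtain ⟨hx0, hx1⟩ := hx
    have hxα : 0 < x ^ α := Real.rpow_pos_of_pos hx0 _
    have key : Real.exp (-u * x ^ α - v * x) ≤ N.factorial / (u * x ^ α) ^ N := by
      have h1 : Real.exp (-u * x ^ α - v * x) ≤ Real.exp (-(u * x ^ α)) := by
        apply Real.exp_le_exp.mpr; nlinarith [hv.le, hx0.le]
      refine h1.trans ?_
      have h2 : (u * x ^ α) ^ N / N.factorial ≤ Real.exp (u * x ^ α) :=
        Real.pow_div_factorial_le_exp _ (mul_nonneg hu.le hxα.le) N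
      rw [Real.exp_neg, inv_le_comm₀ (Real.exp_pos _) (by positivity), inv_div]
      exact h2
    have hnorm : ‖f x‖ = x ^ (h - 1) * Real.exp (-u * x ^ α - v * x) := by
      rw [Real.norm_eq_abs, abs_of_nonneg (by positivity)]
    rw [hnorm]
    calc x ^ (h - 1) * Real.exp (-u * x ^ α - v * x)
        ≤ x ^ (h - 1) * (N.factorial / (u * x ^ α) ^ N) := by
          gcongr
      _ = (N.factorial / u ^ N) * x ^ (h - 1 - α * N) := by
          have e1 : (u * x ^ α) ^ N = u ^ N * x ^ (α * (N:ℝ)) := by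
            rw [mul_pow, ← Real.rpow_natCast (x ^ α), ← Real.rpow_mul hx0.le]
          have e2 : x ^ (h - 1 - α * (N:ℝ)) = x ^ (h - 1) / x ^ (α * (N:ℝ)) :=
            Real.rpow_sub hx0 _ _
          rw [e1, e2]
          ring
  · -- near infinity
    have hg : IntegrableOn (fun x : ℝ => x ^ (max (h - 1) 0) * Real.exp (-v * x))
        (Set.Ioi (1:ℝ)) := by
      have := integrableOn_rpow_mul_exp_neg_mul_rpow (p := 1) (s := max (h - 1) 0)
        (b := v) (lt_of_lt_of_le (by norm_num) (le_max_right _ _)) zero_lt_one hv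
      simp only [Real.rpow_one] at this
      exact this.mono_set (Set.Ioi_subset_Ioi zero_le_one)
    apply hg.mono' ((hcont.mono (Set.Ioi_subset_Ioi zero_le_one)).aestronglyMeasurable
      measurableSet_Ioi)
    filter_upwards [ae_restrict_mem measurableSet_Ioi] with x hx
    have hx1 : (1:ℝ) < x := hx
    have hx0 : (0:ℝ) < x := lt_trans zero_lt_one hx1
    have hnorm : ‖f x‖ = x ^ (h - 1) * Real.exp (-u * x ^ α - v * x) := by
      rw [Real.norm_eq_abs, abs_of_nonneg (by positivity)]
    rw [hnorm]
    apply mul_le_mul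
    · exact Real.rpow_le_rpow_of_exponent_le hx1.le (le_max_left _ _)
    · apply Real.exp_le_exp.mpr
      nlinarith [Real.rpow_pos_of_pos hx0 α, hu.le]
    · positivity
    · positivity
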